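/- arXiv:1303.5846 — 7 statements merged into one kernel-verified Lean document; each statement's English description precedes it below -/
import Mathlib

section
/- Let g ≥ 1 and let Q be a positive definite real symmetric g×g matrix whose set of minimal vectors S = {x ∈ ℤ^g \ {0} : xᵀQx = m(Q)} spans ℝ^g. If the real linear span of {p(x) : x ∈ S} has dimension at most g + 2, then the set {p(x) : x ∈ S} is linearly independent over ℝ (i.e., the perfect cone spanned by the p(x) is simplicial). -/
open Matrix

/-- `p v = v vᵀ`, the rank-one symmetric matrix associated to a vector `v`. -/
def rankOneForm {d : ℕ} {R : Type*} [CommRing R] (v : Fin d → R) :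
    Matrix (Fin d) (Fin d) R :=
  vecMulVec v v

/-- The coercion of an integer vector to a real vector. -/
def castVec {d : ℕ} (x : Fin d → ℤ) : Fin d → ℝ := fun i => (x i : ℝ)

/-- The value `xᵀ Q x` of the quadratic form given by `Q` at an integer vector `x`. -/
def quadVal {d : ℕ} (Q : Matrix (Fin d) (Fin d) ℝ) (x : Fin d → ℤ) : ℝ :=
  castVec x ⬝ᵥ Q.mulVec (castVec x)

/-- The set of minimal vectors of `Q`: the nonzero integer vectors attaining the
arithmetical minimum `m(Q) = min {xᵀQx : x ∈ ℤᵈ, x ≠ 0}`. -/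
def MinimalVectors {d : ℕ} (Q : Matrix (Fin d) (Fin d) ℝ) : Set (Fin d → ℤ) :=
  {x | x ≠ 0 ∧ ∀ y : Fin d → ℤ, y ≠ 0 → quadVal Q x ≤ quadVal Q y}

noncomputable section
namespace PerfectAux

variable {g : ℕ}

def evalQF (c : Fin g → ℝ) : Matrix (Fin g) (Fin g) ℝ →ₗ[ℝ] ℝ where
  toFun M := c ⬝ᵥ M *ᵥ c
  map_add' M N := by simp [Matrix.add_mulVec, dotProduct_add]
  map_smul' r M := by simp [Matrix.smul_mulVec, dotProduct_smul]

lemma evalQF_vecMulVec (c v : Fin g → ℝ) :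
    evalQF c (vecMulVec v v) = (v ⬝ᵥ c) ^ 2 := by
  simp only [evalQF, LinearMap.coe_mk, AddHom.coe_mk, dotProduct, mulVec, vecMulVec_apply, sq]
  rw [Finset.sum_mul_sum]
  apply Finset.sum_congr rfl; intro i _
  rw [Finset.mul_sum]
  apply Finset.sum_congr rfl; intro j _
  ring

def traceQF (Q : Matrix (Fin g) (Fin g) ℝ) : Matrix (Fin g) (Fin g) ℝ →ₗ[ℝ] ℝ where
  toFun M := ∑ i, ∑ j, Q i j * M i j
  map_add' M N := by simp [mul_add, Finset.sum_add_distrib]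
  map_smul' r M := by
    simp only [Matrix.smul_apply, smul_eq_mul, RingHom.id_apply, Finset.mul_sum]
    apply Finset.sum_congr rfl; intro i _
    apply Finset.sum_congr rfl; intro j _
    ring

lemma traceQF_vecMulVec (Q : Matrix (Fin g) (Fin g) ℝ) (v : Fin g → ℝ) :
    traceQF Q (vecMulVec v v) = v ⬝ᵥ Q *ᵥ v := by
  simp only [traceQF, LinearMap.coe_mk, AddHom.coe_mk, dotProduct, mulVec, vecMulVec_apply,
    Finset.mul_sum]
  apply Finset.sum_congr rfl; intro i _
  apply Finset.sum_congr rfl; intro j _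
  ring

lemma dot_symm {Q : Matrix (Fin g) (Fin g) ℝ} (hsym : Qᵀ = Q) (a b : Fin g → ℝ) :
    a ⬝ᵥ Q *ᵥ b = b ⬝ᵥ Q *ᵥ a := by
  rw [dotProduct_mulVec, ← vecMul_transpose, hsym, dotProduct_comm]

lemma quad_add {Q : Matrix (Fin g) (Fin g) ℝ} (hsym : Qᵀ = Q) (a b : Fin g → ℝ) :
    (a + b) ⬝ᵥ Q *ᵥ (a + b) =
      a ⬝ᵥ Q *ᵥ a + 2 * (a ⬝ᵥ Q *ᵥ b) + b ⬝ᵥ Q *ᵥ b := by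
  rw [Matrix.mulVec_add, dotProduct_add, add_dotProduct, add_dotProduct, dot_symm hsym b a]
  ring

lemma quad_sub {Q : Matrix (Fin g) (Fin g) ℝ} (hsym : Qᵀ = Q) (a b : Fin g → ℝ) :
    (a - b) ⬝ᵥ Q *ᵥ (a - b) =
      a ⬝ᵥ Q *ᵥ a - 2 * (a ⬝ᵥ Q *ᵥ b) + b ⬝ᵥ Q *ᵥ b := by
  rw [Matrix.mulVec_sub, dotProduct_sub, sub_dotProduct, sub_dotProduct, dot_symm hsym b a]
  ring

lemma castVec_ne_zero {x : Fin g → ℤ} (hx : x ≠ 0) : castVec x ≠ 0 := by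
  intro h
  apply hx
  funext i
  have := congrFun h i
  simpa [castVec] using this

lemma castVec_add (x y : Fin g → ℤ) : castVec (x + y) = castVec x + castVec y := by
  funext i; simp [castVec]

lemma castVec_sub (x y : Fin g → ℤ) : castVec (x - y) = castVec x - castVec y := by
  funext i; simp [castVec]

lemma vecMulVec_neg (v : Fin g → ℝ) : vecMulVec (-v) (-v) = vecMulVec v v := by
  ext i j; simp [vecMulVec_apply]

end PerfectAux
end

open PerfectAux in
set_option maxHeartbeats 4000000 in
/-- Perfect cones of dimension at most `g + 2` are simplicial: if the minimal vectors
of `Q` span `ℝᵍ` and the real span of the rank-one forms `p(x)`, `x` a minimal vector,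
has dimension at most `g + 2`, then the set `{p(x) : x ∈ S}` is linearly independent
over `ℝ`. -/
theorem perfect_cone_low_dim_simplicial
    (g : ℕ) (hg : 1 ≤ g) (Q : Matrix (Fin g) (Fin g) ℝ) (hQ : Q.PosDef)
    (hspan : Submodule.span ℝ (castVec '' MinimalVectors Q) = ⊤)
    (hdim : Module.finrank ℝ
      (Submodule.span ℝ ((fun x => rankOneForm (castVec x)) '' MinimalVectors Q)) ≤ g + 2) :
    LinearIndependent ℝ
      (fun A : ((fun x => rankOneForm (castVec x)) '' MinimalVectors Q) =>
        (A : Matrix (Fin g) (Fin g) ℝ)) := by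
  classical
  set S := MinimalVectors Q with hS
  set P : Set (Matrix (Fin g) (Fin g) ℝ) := (fun x => rankOneForm (castVec x)) '' S with hP
  -- symmetry of Q
  have hsym : Qᵀ = Q := by
    have := hQ.1
    rwa [Matrix.IsHermitian, conjTranspose_eq_transpose_of_trivial] at this
  -- S nonempty and minimal value
  have hne : Nonempty (Fin g) := ⟨⟨0, hg⟩⟩
  have hSne : S.Nonempty := by
    by_contra hemp
    rw [Set.not_nonempty_iff_eq_empty] at hemp
    rw [hemp] at hspan
    simp only [Set.image_empty, Submodule.span_empty] at hspan
    exact absurd hspan (bot_ne_top)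
  obtain ⟨x₀, hx₀⟩ := hSne
  set m : ℝ := quadVal Q x₀ with hm
  have hmval : ∀ x ∈ S, quadVal Q x = m :=
    fun x hx => le_antisymm (hx.2 x₀ hx₀.1) (hx₀.2 x hx.1)
  have hmpos : 0 < m := by
    have := hQ.dotProduct_mulVec_pos (castVec_ne_zero hx₀.1)
    simpa [quadVal, hm] using this
  -- suppose not linearly independent
  by_contra hLI
  rw [linearIndependent_iff] at hLI
  push_neg at hLI
  have hex : ∃ n : ℕ, ∃ l : ↥P →₀ ℝ,
      Finsupp.linearCombination ℝ (fun A : ↥P => (A : Matrix (Fin g) (Fin g) ℝ)) l = 0 ∧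
      l ≠ 0 ∧ l.support.card = n := by
    obtain ⟨l, h1, h2⟩ := hLI
    exact ⟨l.support.card, l, h1, h2, rfl⟩
  set k := Nat.find hex with hk
  obtain ⟨l, hrel, hlne, hcard⟩ := Nat.find_spec hex
  have hmin : ∀ l' : ↥P →₀ ℝ,
      Finsupp.linearCombination ℝ (fun A : ↥P => (A : Matrix (Fin g) (Fin g) ℝ)) l' = 0 →
      l'.support.card < k → l' = 0 := by
    intro l' h1 h2
    by_contra hne'
    exact Nat.find_min hex h2 ⟨l', h1, hne', rfl⟩
  -- choose minimal vector representatives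
  have hchoose : ∀ A : ↥P, ∃ x, x ∈ S ∧ rankOneForm (castVec x) = (A : Matrix (Fin g) (Fin g) ℝ) := by
    intro A
    obtain ⟨x, hx1, hx2⟩ := A.2
    exact ⟨x, hx1, hx2⟩
  choose xv hxvS hxv using hchoose
  set u : ↥P → (Fin g → ℝ) := fun A => castVec (xv A) with hu
  have huA : ∀ A : ↥P, vecMulVec (u A) (u A) = (A : Matrix (Fin g) (Fin g) ℝ) := fun A => hxv A
  have hself : ∀ A : ↥P, u A ⬝ᵥ Q *ᵥ u A = m := fun A => hmval _ (hxvS A)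
  -- cross inner products are at most m/2 in absolute value
  have hbfsq : ∀ A B : ↥P, A ≠ B → (u A ⬝ᵥ Q *ᵥ u B) ^ 2 ≤ m ^ 2 / 4 := by
    intro A B hAB
    have hxne : xv A - xv B ≠ 0 := by
      intro h
      apply hAB
      apply Subtype.ext
      rw [← hxv A, ← hxv B, sub_eq_zero.mp h]
    have hxne' : xv A + xv B ≠ 0 := by
      intro h
      apply hAB
      apply Subtype.ext
      have : xv A = -xv B := by linear_combination (norm := abel) h
      rw [← hxv A, ← hxv B, this]
      show vecMulVec (castVec (-xv B)) (castVec (-xv B)) = _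
      have : castVec (-(xv B)) = -(castVec (xv B)) := by funext i; simp [castVec]
      rw [this, PerfectAux.vecMulVec_neg]
      rfl
    have h1 : m ≤ quadVal Q (xv A + xv B) :=
      (hmval _ (hxvS A)) ▸ ((hxvS A).2 (xv A + xv B) hxne')
    have h2 : m ≤ quadVal Q (xv A - xv B) :=
      (hmval _ (hxvS A)) ▸ ((hxvS A).2 (xv A - xv B) hxne)
    have e1 : quadVal Q (xv A + xv B)
        = m + 2 * (u A ⬝ᵥ Q *ᵥ u B) + m := by
      show castVec (xv A + xv B) ⬝ᵥ Q *ᵥ castVec (xv A + xv B) = _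
      rw [castVec_add, quad_add hsym]
      rw [hself A, hself B]
    have e2 : quadVal Q (xv A - xv B)
        = m - 2 * (u A ⬝ᵥ Q *ᵥ u B) + m := by
      show castVec (xv A - xv B) ⬝ᵥ Q *ᵥ castVec (xv A - xv B) = _
      rw [castVec_sub, quad_sub hsym]
      rw [hself A, hself B]
    rw [e1] at h1
    rw [e2] at h2
    nlinarith [sq_nonneg (u A ⬝ᵥ Q *ᵥ u B)]
  -- the relation as a finite sum
  have hRel : ∑ A ∈ l.support, l A • (A : Matrix (Fin g) (Fin g) ℝ) = 0 := by
    rw [Finsupp.linearCombination_apply] at hrel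
    exact hrel
  have hLsum : ∀ L : Matrix (Fin g) (Fin g) ℝ →ₗ[ℝ] ℝ,
      ∑ A ∈ l.support, l A * L (A : Matrix (Fin g) (Fin g) ℝ) = 0 := by
    intro L
    have h := congrArg L hRel
    rw [map_sum] at h
    simpa only [LinearMap.map_smul, smul_eq_mul, map_zero] using h
  have hsum0 : ∑ A ∈ l.support, l A = 0 := by
    have h := hLsum (traceQF Q)
    have h2 : ∀ A ∈ l.support, l A * traceQF Q (A : Matrix (Fin g) (Fin g) ℝ) = l A * m := by
      intro A _
      rw [← huA A, traceQF_vecMulVec, hself A]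
    rw [Finset.sum_congr rfl h2, ← Finset.sum_mul] at h
    rcases mul_eq_zero.mp h with h' | h'
    · exact h'
    · exact absurd h' (ne_of_gt hmpos)
  set sp := l.support.filter (fun A => 0 < l A) with hsp
  set sm := l.support.filter (fun A => l A < 0) with hsmdef
  have hsm_eq : l.support.filter (fun A => ¬ 0 < l A) = sm := by
    apply Finset.filter_congr
    intro A hA
    have hA0 : l A ≠ 0 := Finsupp.mem_support_iff.mp hA
    simp only [not_lt]
    exact ⟨fun h => lt_of_le_of_ne h hA0, fun h => le_of_lt h⟩
  have hsplitsum : ∑ A ∈ sp, l A + ∑ A ∈ sm, l A = 0 := by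
    have h := Finset.sum_filter_add_sum_filter_not l.support (fun A => 0 < l A) (fun A => l A)
    rw [hsm_eq, hsum0] at h
    exact h
  set s := ∑ A ∈ sp, l A with hsdef
  have hsm_sum : ∑ A ∈ sm, (- l A) = s := by
    rw [Finset.sum_neg_distrib]
    linarith
  have hsupp_sub : l.support ⊆ sp ∪ sm := by
    intro A hA
    have hA0 : l A ≠ 0 := Finsupp.mem_support_iff.mp hA
    rcases lt_or_gt_of_ne hA0 with h | h
    · exact Finset.mem_union_right _ (Finset.mem_filter.mpr ⟨hA, h⟩)
    · exact Finset.mem_union_left _ (Finset.mem_filter.mpr ⟨hA, h⟩)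
  have hspos : 0 < s := by
    rcases Finset.eq_empty_or_nonempty sp with h | h
    · exfalso
      have hs0 : s = 0 := by rw [hsdef, h, Finset.sum_empty]
      have hsm0 : sm = ∅ := by
        by_contra hne'
        have := Finset.sum_pos (fun A hA => neg_pos.mpr (Finset.mem_filter.mp hA).2)
          (Finset.nonempty_of_ne_empty hne')
        rw [hsm_sum, hs0] at this
        exact lt_irrefl 0 this
      have : l.support = ∅ := by
        apply Finset.eq_empty_of_forall_notMem
        intro A hA
        have := hsupp_sub hA
        rw [h, hsm0] at this
        simpa using this
      exact hlne (Finsupp.support_eq_empty.mp this)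
    · exact Finset.sum_pos (fun A hA => (Finset.mem_filter.mp hA).2) h
  -- the quadratic functional applied to the relation
  have hQsum : ∀ B : ↥P, ∑ A ∈ l.support, l A * (u A ⬝ᵥ Q *ᵥ u B) ^ 2 = 0 := by
    intro B
    have h := hLsum (evalQF (Q *ᵥ u B))
    have h2 : ∀ A ∈ l.support,
        l A * evalQF (Q *ᵥ u B) (A : Matrix (Fin g) (Fin g) ℝ)
          = l A * (u A ⬝ᵥ Q *ᵥ u B) ^ 2 := by
      intro A _
      rw [← huA A, evalQF_vecMulVec]
    rw [Finset.sum_congr rfl h2] at h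
    exact h
  -- every positive coefficient is at most s/4
  have hbndp : ∀ B ∈ sp, l B ≤ s / 4 := by
    intro B hB
    have hBsupp : B ∈ l.support := (Finset.mem_filter.mp hB).1
    have hBpos : 0 < l B := (Finset.mem_filter.mp hB).2
    have h0 := Finset.add_sum_erase l.support
      (fun A => l A * (u A ⬝ᵥ Q *ᵥ u B) ^ 2) hBsupp
    rw [hQsum B] at h0
    have h1 : l B * (u B ⬝ᵥ Q *ᵥ u B) ^ 2
        + ∑ A ∈ l.support.erase B, l A * (u A ⬝ᵥ Q *ᵥ u B) ^ 2 = 0 := h0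
    rw [hself B] at h1
    have h2 : l B * m ^ 2 = ∑ A ∈ l.support.erase B, -(l A * (u A ⬝ᵥ Q *ᵥ u B) ^ 2) := by
      rw [Finset.sum_neg_distrib]
      linarith
    have h3 : ∑ A ∈ l.support.erase B, -(l A * (u A ⬝ᵥ Q *ᵥ u B) ^ 2)
        ≤ ∑ A ∈ l.support.erase B,
            (if l A < 0 then (-(l A)) * (m ^ 2 / 4) else 0) := by
      apply Finset.sum_le_sum
      intro A hA
      have hAs : A ∈ l.support := Finset.mem_of_mem_erase hA
      have hAB : A ≠ B := Finset.ne_of_mem_erase hA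
      have hf : (u A ⬝ᵥ Q *ᵥ u B) ^ 2 ≤ m ^ 2 / 4 := hbfsq A B hAB
      have hf0 : (0:ℝ) ≤ (u A ⬝ᵥ Q *ᵥ u B) ^ 2 := sq_nonneg _
      by_cases hlA : l A < 0
      · rw [if_pos hlA]
        nlinarith
      · rw [if_neg hlA]
        have hApos : 0 < l A :=
          lt_of_le_of_ne (not_lt.mp hlA) (Ne.symm (Finsupp.mem_support_iff.mp hAs))
        nlinarith
    have h4 : ∑ A ∈ l.support.erase B,
        (if l A < 0 then (-(l A)) * (m ^ 2 / 4) else 0)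
        = ∑ A ∈ sm, (-(l A)) * (m ^ 2 / 4) := by
      rw [← Finset.sum_filter]
      congr 1
      ext A
      simp only [Finset.mem_filter, Finset.mem_erase, hsmdef]
      constructor
      · rintro ⟨⟨hne', hsupp'⟩, hneg⟩
        exact ⟨hsupp', hneg⟩
      · rintro ⟨hsupp', hneg⟩
        refine ⟨⟨?_, hsupp'⟩, hneg⟩
        intro hEq
        rw [hEq] at hneg
        exact absurd hBpos (not_lt.mpr (le_of_lt hneg))
    have h5 : ∑ A ∈ sm, (-(l A)) * (m ^ 2 / 4) = s * (m ^ 2 / 4) := by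
      rw [← Finset.sum_mul, hsm_sum]
    have h6 : l B * m ^ 2 ≤ s * (m ^ 2 / 4) := by
      rw [h2]
      rw [← h5, ← h4]
      exact h3
    have h7 : l B * m ^ 2 ≤ s / 4 * m ^ 2 := by
      have he : s * (m ^ 2 / 4) = s / 4 * m ^ 2 := by ring
      linarith
    exact le_of_mul_le_mul_right h7 (by positivity)
  -- every negative coefficient is at least -s/4
  have hbndm : ∀ B ∈ sm, -(l B) ≤ s / 4 := by
    intro B hB
    have hBsupp : B ∈ l.support := (Finset.mem_filter.mp hB).1
    have hBneg : l B < 0 := (Finset.mem_filter.mp hB).2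
    have h0 := Finset.add_sum_erase l.support
      (fun A => l A * (u A ⬝ᵥ Q *ᵥ u B) ^ 2) hBsupp
    rw [hQsum B] at h0
    have h1 : l B * (u B ⬝ᵥ Q *ᵥ u B) ^ 2
        + ∑ A ∈ l.support.erase B, l A * (u A ⬝ᵥ Q *ᵥ u B) ^ 2 = 0 := h0
    rw [hself B] at h1
    have h2 : (-(l B)) * m ^ 2 = ∑ A ∈ l.support.erase B, l A * (u A ⬝ᵥ Q *ᵥ u B) ^ 2 := by
      linarith
    have h3 : ∑ A ∈ l.support.erase B, l A * (u A ⬝ᵥ Q *ᵥ u B) ^ 2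
        ≤ ∑ A ∈ l.support.erase B,
            (if 0 < l A then (l A) * (m ^ 2 / 4) else 0) := by
      apply Finset.sum_le_sum
      intro A hA
      have hAs : A ∈ l.support := Finset.mem_of_mem_erase hA
      have hAB : A ≠ B := Finset.ne_of_mem_erase hA
      have hf : (u A ⬝ᵥ Q *ᵥ u B) ^ 2 ≤ m ^ 2 / 4 := hbfsq A B hAB
      have hf0 : (0:ℝ) ≤ (u A ⬝ᵥ Q *ᵥ u B) ^ 2 := sq_nonneg _
      by_cases hlA : 0 < l A
      · rw [if_pos hlA]
        nlinarith
      · rw [if_neg hlA]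
        have hAneg : l A < 0 :=
          lt_of_le_of_ne (not_lt.mp hlA) (Finsupp.mem_support_iff.mp hAs)
        nlinarith
    have h4 : ∑ A ∈ l.support.erase B,
        (if 0 < l A then (l A) * (m ^ 2 / 4) else 0)
        = ∑ A ∈ sp, (l A) * (m ^ 2 / 4) := by
      rw [← Finset.sum_filter]
      congr 1
      ext A
      simp only [Finset.mem_filter, Finset.mem_erase, hsp]
      constructor
      · rintro ⟨⟨hne', hsupp'⟩, hpos⟩
        exact ⟨hsupp', hpos⟩
      · rintro ⟨hsupp', hpos⟩
        refine ⟨⟨?_, hsupp'⟩, hpos⟩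
        intro hEq
        rw [hEq] at hpos
        exact absurd hBneg (not_lt.mpr (le_of_lt hpos))
    have h5 : ∑ A ∈ sp, (l A) * (m ^ 2 / 4) = s * (m ^ 2 / 4) := by
      rw [← Finset.sum_mul]
    have h6 : (-(l B)) * m ^ 2 ≤ s * (m ^ 2 / 4) := by
      rw [h2]
      rw [← h5, ← h4]
      exact h3
    have h7 : (-(l B)) * m ^ 2 ≤ s / 4 * m ^ 2 := by
      have he : s * (m ^ 2 / 4) = s / 4 * m ^ 2 := by ring
      linarith
    exact le_of_mul_le_mul_right h7 (by positivity)
  -- each side has at least 4 elements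
  have hcardp : 4 ≤ sp.card := by
    have hle : s ≤ (sp.card : ℝ) * (s / 4) := by
      have := Finset.sum_le_sum hbndp
      rw [Finset.sum_const, nsmul_eq_mul] at this
      exact le_trans (le_of_eq hsdef) this
    by_contra h
    push_neg at h
    have h3 : (sp.card : ℝ) ≤ 3 := by
      exact_mod_cast Nat.lt_succ_iff.mp h
    nlinarith
  have hcardm : 4 ≤ sm.card := by
    have hle : s ≤ (sm.card : ℝ) * (s / 4) := by
      have := Finset.sum_le_sum hbndm
      rw [Finset.sum_const, nsmul_eq_mul] at this
      rw [hsm_sum] at this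
      exact this
    by_contra h
    push_neg at h
    have h3 : (sm.card : ℝ) ≤ 3 := by
      exact_mod_cast Nat.lt_succ_iff.mp h
    nlinarith
  -- the subspace spanned by the negative-side vectors
  set W : Submodule ℝ (Fin g → ℝ) := Submodule.span ℝ (↑(sm.image u) : Set (Fin g → ℝ)) with hW
  have hWm : ∀ A ∈ sm, u A ∈ W := fun A hA =>
    Submodule.subset_span (Finset.mem_coe.mpr (Finset.mem_image_of_mem u hA))
  have hWmem : ∀ A ∈ l.support, u A ∈ W := by
    intro B hBsupp
    rcases Finset.mem_union.mp (hsupp_sub hBsupp) with hBp | hBm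
    swap
    · exact hWm B hBm
    have hBpos : 0 < l B := (Finset.mem_filter.mp hBp).2
    by_contra hnot
    have hmkne : W.mkQ (u B) ≠ 0 := by
      rw [Submodule.mkQ_apply]
      intro h0
      exact hnot ((Submodule.Quotient.mk_eq_zero W).mp h0)
    obtain ⟨φ', hφ'⟩ : ∃ φ' : Module.Dual ℝ ((Fin g → ℝ) ⧸ W), φ' (W.mkQ (u B)) ≠ 0 := by
      by_contra hall
      push_neg at hall
      exact hmkne ((Module.forall_dual_apply_eq_zero_iff ℝ _).mp hall)
    set ψ : (Fin g → ℝ) →ₗ[ℝ] ℝ := φ'.comp W.mkQ with hψdef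
    set c : Fin g → ℝ := fun i => ψ (fun j => if i = j then 1 else 0) with hc
    have hψ : ∀ x : Fin g → ℝ, ψ x = x ⬝ᵥ c := by
      intro x
      rw [LinearMap.pi_apply_eq_sum_univ ψ x]
      simp [dotProduct, hc, smul_eq_mul]
    have hψW : ∀ v ∈ W, ψ v = 0 := by
      intro v hv
      rw [hψdef]
      simp only [LinearMap.comp_apply, Submodule.mkQ_apply,
        (Submodule.Quotient.mk_eq_zero W).mpr hv, map_zero]
    have h := hLsum (evalQF c)
    have h2 : ∀ A ∈ l.support,
        l A * evalQF c (A : Matrix (Fin g) (Fin g) ℝ) = l A * (ψ (u A)) ^ 2 := by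
      intro A _
      rw [← huA A, evalQF_vecMulVec, hψ (u A)]
    rw [Finset.sum_congr rfl h2] at h
    have hsplit := Finset.sum_filter_add_sum_filter_not l.support (fun A => 0 < l A)
      (fun A => l A * (ψ (u A)) ^ 2)
    rw [hsm_eq, h] at hsplit
    have hsm0 : ∑ A ∈ sm, l A * (ψ (u A)) ^ 2 = 0 := by
      apply Finset.sum_eq_zero
      intro A hA
      rw [hψW (u A) (hWm A hA)]
      ring
    rw [hsm0, add_zero] at hsplit
    have hBzero : l B * (ψ (u B)) ^ 2 = 0 :=
      (Finset.sum_eq_zero_iff_of_nonneg (fun A hA => by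
        have := (Finset.mem_filter.mp hA).2
        positivity)).mp hsplit B hBp
    have hψB : ψ (u B) = 0 := by
      rcases mul_eq_zero.mp hBzero with h' | h'
      · exact absurd h' (ne_of_gt hBpos)
      · exact (pow_eq_zero_iff two_ne_zero).mp h'
    exact hφ' hψB
  -- dimension counts
  have hrle : Module.finrank ℝ W ≤ sm.card := by
    have h1 : Set.finrank ℝ (↑(sm.image u) : Set (Fin g → ℝ)) ≤ (sm.image u).card :=
      finrank_span_finset_le_card (sm.image u)
    exact le_trans h1 Finset.card_image_le
  have hfq : Module.finrank ℝ ((Fin g → ℝ) ⧸ W) + Module.finrank ℝ W = g := by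
    have h := Submodule.finrank_quotient_add_finrank W
    rwa [Module.finrank_fin_fun] at h
  -- basis of the quotient coming from minimal vectors
  have hsSpan : Submodule.span ℝ (W.mkQ '' (castVec '' S)) = ⊤ := by
    rw [Submodule.span_image, hspan, Submodule.map_top, Submodule.range_mkQ]
  obtain ⟨b, hbsub, hbspan, hbli⟩ := exists_linearIndependent ℝ (W.mkQ '' (castVec '' S))
  rw [hsSpan] at hbspan
  have hbfin : b.Finite := hbli.setFinite
  haveI : Fintype b := hbfin.fintype
  let bB : Module.Basis b ℝ ((Fin g → ℝ) ⧸ W) := Module.Basis.mk hbli (by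
    rw [Subtype.range_coe_subtype, Set.setOf_mem_eq, hbspan])
  have hbcard : Fintype.card b = Module.finrank ℝ ((Fin g → ℝ) ⧸ W) :=
    (Module.finrank_eq_card_basis bB).symm
  have hbchoose : ∀ w : b, ∃ x, x ∈ S ∧ W.mkQ (castVec x) = (w : (Fin g → ℝ) ⧸ W) := by
    intro w
    obtain ⟨v, hv, hveq⟩ := hbsub w.2
    obtain ⟨x, hx, rfl⟩ := hv
    exact ⟨x, hx, hveq⟩
  choose z hzS hzq using hbchoose
  -- dual functionals associated to the basis
  set φf : b → ((Fin g → ℝ) →ₗ[ℝ] ℝ) := fun w => (bB.coord w).comp W.mkQ with hφf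
  set cf : b → (Fin g → ℝ) := fun w i => φf w (fun j => if i = j then 1 else 0) with hcf
  have hφdot : ∀ (w : b) (x : Fin g → ℝ), φf w x = x ⬝ᵥ cf w := by
    intro w x
    rw [LinearMap.pi_apply_eq_sum_univ (φf w) x]
    simp [dotProduct, hcf, smul_eq_mul]
  have hφW : ∀ (w : b), ∀ v ∈ W, φf w v = 0 := by
    intro w v hv
    rw [hφf]
    simp only [LinearMap.comp_apply, Submodule.mkQ_apply,
      (Submodule.Quotient.mk_eq_zero W).mpr hv, map_zero]
  have hφz : ∀ w w' : b, φf w (castVec (z w')) = if w' = w then 1 else 0 := by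
    intro w w'
    rw [hφf]
    simp only [LinearMap.comp_apply]
    rw [hzq w']
    have hbb : (w' : (Fin g → ℝ) ⧸ W) = bB w' := (Module.Basis.mk_apply hbli _ w').symm
    rw [hbb, Module.Basis.coord_apply, Module.Basis.repr_self]
    exact Finsupp.single_apply
  -- the distinguished positive element
  have hspne : sp.Nonempty := Finset.card_pos.mp (by omega)
  obtain ⟨B₀, hB₀⟩ := hspne
  have hB₀supp : B₀ ∈ l.support := (Finset.mem_filter.mp hB₀).1
  set t' : Finset ↥P := l.support.erase B₀ with ht'
  have hkcard : l.support.card = k := hcard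
  have ht'card : t'.card = k - 1 := by
    rw [ht', Finset.card_erase_of_mem hB₀supp, hkcard]
  have hkpos : 1 ≤ k := by
    rw [← hkcard]
    exact Finset.card_pos.mpr ⟨B₀, hB₀supp⟩
  -- the combined family
  set famF : ({A : ↥P // A ∈ t'} ⊕ b) → Matrix (Fin g) (Fin g) ℝ :=
    Sum.elim (fun A => ((A : ↥P) : Matrix (Fin g) (Fin g) ℝ))
      (fun w => vecMulVec (castVec (z w)) (castVec (z w))) with hfamdef
  have hfamP : ∀ i, famF i ∈ P := by
    intro i
    cases i with
    | inl A => exact (A : ↥P).2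
    | inr w => exact ⟨z w, hzS w, rfl⟩
  have hfamLI : LinearIndependent ℝ famF := by
    rw [Fintype.linearIndependent_iff]
    intro coef hcoef
    rw [Fintype.sum_sum_type] at hcoef
    simp only [hfamdef, Sum.elim_inl, Sum.elim_inr] at hcoef
    have hβ : ∀ w₀ : b, coef (Sum.inr w₀) = 0 := by
      intro w₀
      have h := congrArg (evalQF (cf w₀)) hcoef
      rw [map_add, map_sum, map_sum, map_zero] at h
      have hleft : ∀ A : {A : ↥P // A ∈ t'},
          evalQF (cf w₀) (coef (Sum.inl A) • ((A : ↥P) : Matrix (Fin g) (Fin g) ℝ)) = 0 := by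
        intro A
        rw [LinearMap.map_smul, ← huA (A : ↥P), evalQF_vecMulVec, ← hφdot w₀ (u (A : ↥P)),
          hφW w₀ (u (A : ↥P)) (hWmem (A : ↥P) (Finset.mem_of_mem_erase A.2))]
        simp
      have hright : ∀ w : b,
          evalQF (cf w₀) (coef (Sum.inr w) • vecMulVec (castVec (z w)) (castVec (z w)))
            = coef (Sum.inr w) * (if w = w₀ then 1 else 0) := by
        intro w
        rw [LinearMap.map_smul, evalQF_vecMulVec, ← hφdot w₀ (castVec (z w)), hφz w₀ w]
        by_cases hw : w = w₀ <;> simp [hw]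
      rw [Finset.sum_congr rfl (fun A _ => hleft A),
        Finset.sum_congr rfl (fun w _ => hright w)] at h
      simpa [mul_ite] using h
    simp only [hβ, zero_smul, Finset.sum_const_zero, add_zero] at hcoef
    have hα : ∀ A : {A : ↥P // A ∈ t'}, coef (Sum.inl A) = 0 := by
      set αf : ↥P → ℝ := fun A => if h : A ∈ t' then coef (Sum.inl ⟨A, h⟩) else 0 with hαf
      have hsupp' : ∀ A : ↥P, αf A ≠ 0 → A ∈ t' := by
        intro A hA
        by_contra hmem
        rw [hαf] at hA
        simp only [dif_neg hmem] at hA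
        exact hA rfl
      set l'' : ↥P →₀ ℝ := Finsupp.onFinset t' αf hsupp' with hl''
      have hl''app : ∀ A : ↥P, l'' A = αf A := fun A => Finsupp.onFinset_apply
      have hl''rel : Finsupp.linearCombination ℝ
          (fun A : ↥P => (A : Matrix (Fin g) (Fin g) ℝ)) l'' = 0 := by
        rw [Finsupp.linearCombination_apply, Finsupp.sum]
        rw [Finset.sum_subset Finsupp.support_onFinset_subset (fun x _ hx => by
          rw [Finsupp.notMem_support_iff.mp hx, zero_smul])]
        rw [← Finset.sum_attach t' (fun A => l'' A • (A : Matrix (Fin g) (Fin g) ℝ))]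
        have hterm : ∀ x : {A : ↥P // A ∈ t'},
            l'' (x : ↥P) • ((x : ↥P) : Matrix (Fin g) (Fin g) ℝ)
              = coef (Sum.inl x) • ((x : ↥P) : Matrix (Fin g) (Fin g) ℝ) := by
          intro x
          congr 1
          rw [hl''app, hαf]
          simp only [dif_pos x.2]
        rw [Finset.sum_congr rfl (fun x _ => hterm x)]
        exact hcoef
      have hl''0 : l'' = 0 := by
        apply hmin l'' hl''rel
        have h1 : l''.support.card ≤ t'.card :=
          Finset.card_le_card Finsupp.support_onFinset_subset
        omega
      intro A
      have h1 : l'' (A : ↥P) = 0 := by rw [hl''0]; rfl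
      rw [hl''app, hαf] at h1
      simpa only [dif_pos A.2] using h1
    intro i
    cases i with
    | inl A => exact hα A
    | inr w => exact hβ w
  -- conclude by counting dimensions
  have hfamN : LinearIndependent ℝ
      (fun i => (⟨famF i, Submodule.subset_span (hfamP i)⟩ : Submodule.span ℝ P)) := by
    apply LinearIndependent.of_comp (Submodule.span ℝ P).subtype
    exact hfamLI
  have hcount := hfamN.fintype_card_le_finrank
  have hσcard : Fintype.card ({A : ↥P // A ∈ t'} ⊕ b) = t'.card + Fintype.card b := by
    rw [Fintype.card_sum, Fintype.card_coe]
  have hksplit : sp.card + sm.card = k := by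
    have h := Finset.card_filter_add_card_filter_not
      (s := l.support) (p := fun A => 0 < l A)
    rw [hsm_eq] at h
    rw [← hkcard]
    exact h
  rw [hσcard] at hcount
  have hfinal : t'.card + Fintype.card b ≤ g + 2 := le_trans hcount hdim
  rw [ht'card, hbcard] at hfinal
  omega
end

section
/- Let g ≥ 3 and 3 ≤ r ≤ g, and set v = e₁ + … + e_r ∈ ℝ^g (sum of the first r standard basis vectors). Suppose w ∈ ℝ^g, γ ∈ ℝ and β ∈ ℝ^g satisfy the matrix identity w wᵀ = γ·v vᵀ + diag(β₁, …, β_g). Then w is a scalar multiple of v or a scalar multiple of one of the standard basis vectors e₁, …, e_g. -/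
open Matrix

/-- Let `g ≥ 3`, `3 ≤ r ≤ g` and `v = e₁ + … + e_r ∈ ℝᵍ` (here encoded with `0`-based
indices: `v k = 1` iff `k < r`). If `w wᵀ = γ · v vᵀ + diag(β)`, then `w` is a scalar
multiple of `v` or a scalar multiple of one of the standard basis vectors `eᵢ`. -/
theorem rankOne_relation_multiple_of_v_or_basis
    (g r : ℕ) (hg : 3 ≤ g) (hr : 3 ≤ r) (hrg : r ≤ g)
    (v : Fin g → ℝ) (hv : v = fun k : Fin g => if (k : ℕ) < r then (1 : ℝ) else 0)
    (w : Fin g → ℝ) (γ : ℝ) (β : Fin g → ℝ)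
    (h : vecMulVec w w = γ • vecMulVec v v + Matrix.diagonal β) :
    (∃ t : ℝ, w = t • v) ∨
      (∃ (i : Fin g) (t : ℝ), w = t • (Pi.single i 1 : Fin g → ℝ)) := by
  have hoff : ∀ i j : Fin g, i ≠ j → w i * w j = γ * (v i * v j) := by
    intro i j hij
    have := congrFun (congrFun h i) j
    simpa [vecMulVec_apply, Matrix.add_apply, Matrix.smul_apply,
      Matrix.diagonal_apply_ne _ hij] using this
  by_cases hγ : γ = 0
  · -- off-diagonal products vanish, so at most one nonzero coordinate
    right
    have hzero : ∀ i j : Fin g, i ≠ j → w i * w j = 0 := by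
      intro i j hij; simpa [hγ] using hoff i j hij
    by_cases hw : w = 0
    · exact ⟨⟨0, by omega⟩, 0, by simp [hw]⟩
    · obtain ⟨i, hi⟩ := Function.ne_iff.mp hw
      refine ⟨i, w i, funext fun j => ?_⟩
      by_cases hji : j = i
      · simp [hji]
      · have := hzero i j (fun hh => hji hh.symm)
        have hwj : w j = 0 := by
          rcases mul_eq_zero.mp this with h' | h'
          · exact absurd h' hi
          · exact h'
        simp [hwj, Pi.single_apply, hji]
  · left
    have h0 : (0 : ℕ) < r := by omega
    have h1 : (1 : ℕ) < r := by omega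
    have h2 : (2 : ℕ) < r := by omega
    set i0 : Fin g := ⟨0, by omega⟩
    set i1 : Fin g := ⟨1, by omega⟩
    set i2 : Fin g := ⟨2, by omega⟩
    have hvlt : ∀ k : Fin g, (k : ℕ) < r → v k = 1 := by
      intro k hk; simp [hv, hk]
    have hvge : ∀ k : Fin g, r ≤ (k : ℕ) → v k = 0 := by
      intro k hk; simp [hv, Nat.not_lt.mpr hk]
    -- product of two distinct coordinates below r equals γ
    have hprod : ∀ i j : Fin g, i ≠ j → (i : ℕ) < r → (j : ℕ) < r → w i * w j = γ := by
      intro i j hij hi hj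
      rw [hoff i j hij, hvlt i hi, hvlt j hj]; ring
    have hne : ∀ i j : Fin g, i ≠ j → (i : ℕ) < r → (j : ℕ) < r → w i ≠ 0 := by
      intro i j hij hi hj hwi
      exact hγ (by rw [← hprod i j hij hi hj, hwi, zero_mul])
    refine ⟨w i0, funext fun k => ?_⟩
    by_cases hk : (k : ℕ) < r
    · -- show w k = w i0
      have hvk := hvlt k hk
      simp only [Pi.smul_apply, smul_eq_mul, hvk, mul_one]
      by_cases hk0 : k = i0
      · rw [hk0]
      · -- pick j ∈ {i1, i2} with j ≠ k
        have : ∃ j : Fin g, j ≠ k ∧ j ≠ i0 ∧ (j : ℕ) < r := by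
          by_cases hk1 : k = i1
          · exact ⟨i2, by simp [hk1, i1, i2, Fin.ext_iff], by simp [i0, i2, Fin.ext_iff], h2⟩
          · exact ⟨i1, fun hh => hk1 hh.symm, by simp [i0, i1, Fin.ext_iff], h1⟩
        obtain ⟨j, hjk, hj0, hjr⟩ := this
        have e1 : w k * w j = γ := hprod k j (fun hh => hjk hh.symm) hk hjr
        have e2 : w i0 * w j = γ := hprod i0 j (fun hh => hj0 hh.symm) h0 hjr
        have hwj : w j ≠ 0 := hne j i0 hj0 hjr h0
        exact mul_right_cancel₀ hwj (e1.trans e2.symm)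
    · -- w k = 0
      have hvk := hvge k (Nat.not_lt.mp hk)
      have hki0 : i0 ≠ k := by
        intro hh; apply hk; rw [← hh]; exact h0
      have := hoff i0 k hki0
      rw [hvk, mul_zero, mul_zero] at this
      have hw0 : w i0 ≠ 0 := hne i0 i1 (by simp [i0, i1, Fin.ext_iff]) h0 h1
      have hwk : w k = 0 := by
        rcases mul_eq_zero.mp this with h' | h'
        · exact absurd h' hw0
        · exact h'
      simp [hwk, hvk]
end

section
/- Let n ≥ 3 and let a, b, c be real numbers with ac ≠ b². If λ₁, …, λₙ are real numbers satisfying a + b(λᵢ + λⱼ) + c·λᵢλⱼ = 0 for all pairs of distinct indices i ≠ j, then all the λᵢ are equal. -/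
/-- If `n ≥ 3`, `a, b, c` are reals with `ac ≠ b²`, and `λ₁, …, λₙ` are reals
satisfying `a + b(λᵢ + λⱼ) + c λᵢλⱼ = 0` for all `i ≠ j`, then all the `λᵢ` are
equal. -/
theorem all_eq_of_pairwise_bilinear_relation
    (n : ℕ) (hn : 3 ≤ n) (a b c : ℝ) (habc : a * c ≠ b ^ 2)
    (lam : Fin n → ℝ)
    (h : ∀ i j : Fin n, i ≠ j → a + b * (lam i + lam j) + c * (lam i * lam j) = 0) :
    ∀ i j : Fin n, lam i = lam j := by
  intro i j
  by_contra hne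
  have hij : i ≠ j := fun h' => hne (by rw [h'])
  -- find a third index k
  obtain ⟨k, hk⟩ : (({i, j} : Finset (Fin n))ᶜ).Nonempty := by
    rw [← Finset.card_pos, Finset.card_compl]
    have h2 : ({i, j} : Finset (Fin n)).card ≤ 2 :=
      (Finset.card_insert_le _ _).trans (by simp)
    simp only [Fintype.card_fin]
    omega
  simp only [Finset.mem_compl, Finset.mem_insert, Finset.mem_singleton, not_or] at hk
  obtain ⟨hki, hkj⟩ := hk
  have hik := h i k (fun e => hki e.symm)
  have hjk := h j k (fun e => hkj e.symm)
  have hij' := h i j hij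
  have hsub : (b + c * lam k) * (lam i - lam j) = 0 := by ring_nf; linarith [hik, hjk]
  have hbk : b + c * lam k = 0 := by
    rcases mul_eq_zero.mp hsub with h1 | h1
    · exact h1
    · exact absurd (by linarith) hne
  rcases eq_or_ne c 0 with hc | hc
  · -- c = 0 gives b = 0 then a = 0, contradiction
    have hb : b = 0 := by rw [hc] at hbk; linarith
    have ha : a = 0 := by rw [hc, hb] at hij'; linarith
    exact habc (by rw [ha, hb, hc]; ring)
  · -- c ≠ 0: one of b + c λᵢ, b + c λⱼ is zero
    have key : b + c * lam i = 0 ∨ b + c * lam j = 0 := by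
      by_contra hcon
      push_neg at hcon
      obtain ⟨hi0, hj0⟩ := hcon
      have h1 : (b + c * lam i) * (lam j - lam k) = 0 := by ring_nf; linarith [hij', hik]
      have h2 : lam j = lam k := by
        rcases mul_eq_zero.mp h1 with h3 | h3
        · exact absurd h3 hi0
        · linarith
      exact hj0 (by rw [h2]; exact hbk)
    rcases key with hz | hz
    · exact habc (by linear_combination c * hij' - (b + c * lam j) * hz)
    · exact habc (by linear_combination c * hij' - (b + c * lam i) * hz)
end

section
/- For every g ≥ 1, the g(g+1)/2 matrices {p(eᵢ) : 1 ≤ i ≤ g} ∪ {p(eᵢ − eⱼ) : 1 ≤ i < j ≤ g}, where e₁, …, e_g is the standard basis of ℤ^g, form a ℤ-basis of the lattice of symmetric g×g integer matrices. (In particular, the top-dimensional perfect cone associated to the root lattice A_g is basic, hence simplicial.) -/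
open Matrix

/-- The lattice `Sym²(ℤᵍ)` of symmetric `g × g` integer matrices. -/
def symLattice (g : ℕ) : Submodule ℤ (Matrix (Fin g) (Fin g) ℤ) where
  carrier := {A | A.IsSymm}
  zero_mem' := Matrix.isSymm_zero
  add_mem' := fun ha hb => ha.add hb
  smul_mem' := fun c _ ha => ha.smul c

namespace AgAux

variable {g : ℕ}

abbrev Idx (g : ℕ) := {q : Fin g × Fin g // q.1 ≤ q.2}

def vvec (q : Idx g) : Fin g → ℤ :=
  if q.1.1 = q.1.2 then Pi.single q.1.1 1 else Pi.single q.1.1 1 - Pi.single q.1.2 1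

lemma rankOneForm_isSymm (v : Fin g → ℤ) : (rankOneForm v).IsSymm := by
  show (rankOneForm v)ᵀ = rankOneForm v
  ext i j
  simp [rankOneForm, vecMulVec_apply, mul_comm]

def F (q : Idx g) : symLattice g := ⟨rankOneForm (vvec q), rankOneForm_isSymm _⟩

lemma F_coe (q : Idx g) (i j : Fin g) :
    ((F q : symLattice g) : Matrix (Fin g) (Fin g) ℤ) i j = vvec q i * vvec q j := by
  simp [F, rankOneForm, vecMulVec_apply]

def buildL : (Idx g → ℤ) →ₗ[ℤ] symLattice g where
  toFun c := ∑ q, c q • F q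
  map_add' c d := by simp [add_smul, Finset.sum_add_distrib]
  map_smul' r c := by simp [smul_smul, Finset.smul_sum]

def coordsL : symLattice g →ₗ[ℤ] (Idx g → ℤ) where
  toFun A q :=
    if q.1.1 = q.1.2 then ∑ l, (A : Matrix (Fin g) (Fin g) ℤ) q.1.1 l
    else -(A : Matrix (Fin g) (Fin g) ℤ) q.1.1 q.1.2
  map_add' A B := by
    funext q
    by_cases h : q.1.1 = q.1.2 <;> simp [h, Finset.sum_add_distrib, neg_add, add_comm]
  map_smul' r A := by
    funext q
    by_cases h : q.1.1 = q.1.2 <;> simp [h, Finset.mul_sum, mul_neg]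

lemma build_entry (c : Idx g → ℤ) (i j : Fin g) :
    ((buildL c : symLattice g) : Matrix (Fin g) (Fin g) ℤ) i j
      = ∑ q, c q * (vvec q i * vvec q j) := by
  have h : ((buildL c : symLattice g) : Matrix (Fin g) (Fin g) ℤ)
      = ∑ q, c q • ((F q : symLattice g) : Matrix (Fin g) (Fin g) ℤ) := by
    simp [buildL]
  rw [h, Matrix.sum_apply]
  simp [F_coe, mul_assoc]

lemma sum_vvec (q : Idx g) : ∑ l, vvec q l = if q.1.1 = q.1.2 then 1 else 0 := by
  by_cases h : q.1.1 = q.1.2 <;> simp [vvec, h, Finset.sum_sub_distrib]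

lemma offterm (a b i j : Fin g) (hab : a < b) (hij : i < j)
    (hne : ¬(a = i ∧ b = j)) :
    ((Pi.single i 1 - Pi.single j 1 : Fin g → ℤ) a) *
      ((Pi.single i 1 - Pi.single j 1 : Fin g → ℤ) b) = 0 := by
  rcases eq_or_ne b i with hbi | hbi
  · have h1 : a ≠ i := fun h => hab.ne (h.trans hbi.symm)
    have h2 : a ≠ j := by
      intro h
      have : j < i := by rw [← h, ← hbi]; exact hab
      exact absurd hij (asymm this)
    simp [Pi.single_apply, h1, h2]
  · rcases eq_or_ne b j with hbj | hbj
    · have h1 : a ≠ i := fun h => hne ⟨h, hbj⟩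
      have h2 : a ≠ j := fun h => hab.ne (h.trans hbj.symm)
      simp [Pi.single_apply, h1, h2]
    · simp [Pi.single_apply, hbi, hbj]

lemma coords_build (c : Idx g → ℤ) : coordsL (buildL c) = c := by
  funext q
  obtain ⟨⟨a, b⟩, hab⟩ := q
  by_cases h : a = b
  · subst h
    simp only [coordsL, LinearMap.coe_mk, AddHom.coe_mk]
    rw [if_pos trivial]
    have h1 : ∀ l, ((buildL c : symLattice g) : Matrix (Fin g) (Fin g) ℤ) a l
        = ∑ q, c q * (vvec q a * vvec q l) := fun l => build_entry c a l
    simp only [h1]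
    rw [Finset.sum_comm]
    have h2 : ∀ q : Idx g, ∑ l, c q * (vvec q a * vvec q l)
        = c q * (vvec q a * if q.1.1 = q.1.2 then 1 else 0) := by
      intro q
      rw [← Finset.mul_sum, ← Finset.mul_sum, sum_vvec]
    simp only [h2]
    rw [Finset.sum_eq_single (⟨(a, a), le_refl a⟩ : Idx g)]
    · simp [vvec, Pi.single_apply]
    · rintro ⟨⟨i, j⟩, hij⟩ _ hne
      by_cases hd : i = j
      · subst hd
        have hia : i ≠ a := fun h => hne (by simp [h])
        simp [vvec, Pi.single_apply, hia, Ne.symm hia]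
      · simp [vvec, hd]
    · simp
  · have hab' : a < b := lt_of_le_of_ne hab h
    simp only [coordsL, LinearMap.coe_mk, AddHom.coe_mk]
    rw [if_neg h, build_entry, neg_eq_iff_eq_neg]
    rw [Finset.sum_eq_single (⟨(a, b), hab⟩ : Idx g)]
    · simp [vvec, h, Pi.single_apply, Ne.symm h]
    · rintro ⟨⟨i, j⟩, hij⟩ _ hne
      by_cases hd : i = j
      · subst hd
        have : ((Pi.single i 1 : Fin g → ℤ) a) * ((Pi.single i 1 : Fin g → ℤ) b) = 0 := by
          by_cases hia : a = i
          · have : b ≠ i := fun hbi => h (hia.trans hbi.symm)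
            simp [Pi.single_apply, this]
          · simp [Pi.single_apply, hia]
        simp [vvec, this]
      · have hij' : i < j := lt_of_le_of_ne hij hd
        have hne' : ¬(a = i ∧ b = j) := by
          rintro ⟨rfl, rfl⟩
          exact hne rfl
        simp only [vvec, if_neg hd]
        rw [offterm a b i j hab' hij' hne', mul_zero]
    · simp
  
lemma coords_zero (A : symLattice g) (hA : coordsL A = 0) : A = 0 := by
  have hsym : ((A : Matrix (Fin g) (Fin g) ℤ)).IsSymm := A.2
  have hoff : ∀ i j : Fin g, i ≠ j → (A : Matrix (Fin g) (Fin g) ℤ) i j = 0 := by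
    intro i j hne
    rcases hne.lt_or_gt with hlt | hlt
    · have := congrFun hA ⟨(i, j), hlt.le⟩
      simpa [coordsL, hne, neg_eq_zero] using this
    · have := congrFun hA ⟨(j, i), hlt.le⟩
      have hji : (A : Matrix (Fin g) (Fin g) ℤ) j i = 0 := by
        simpa [coordsL, hne.symm, neg_eq_zero] using this
      rw [← hsym.apply i j]
      exact hji
  have hdiag : ∀ i : Fin g, (A : Matrix (Fin g) (Fin g) ℤ) i i = 0 := by
    intro i
    have := congrFun hA ⟨(i, i), le_refl i⟩
    simp only [coordsL, LinearMap.coe_mk, AddHom.coe_mk, if_pos rfl, Pi.zero_apply] at this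
    rw [Finset.sum_eq_single i (fun l _ hl => hoff i l (Ne.symm hl)) (by simp)] at this
    exact this
  apply Subtype.ext
  ext i j
  by_cases h : i = j
  · subst h; simpa using hdiag i
  · simpa using hoff i j h

def symEquiv (g : ℕ) : symLattice g ≃ₗ[ℤ] (Idx g → ℤ) :=
  LinearEquiv.ofLinear coordsL buildL
    (LinearMap.ext fun c => by simpa using coords_build c)
    (by
      refine LinearMap.ext fun A => ?_
      have h0 : coordsL (buildL (coordsL A) - A) = 0 := by
        rw [map_sub, coords_build, sub_self]
      have := coords_zero _ h0
      simpa [sub_eq_zero] using this)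

lemma buildL_single (q : Idx g) : buildL (Pi.single q (1 : ℤ)) = F q := by
  show (∑ q', (Pi.single q 1 : Idx g → ℤ) q' • F q') = F q
  rw [Finset.sum_eq_single q]
  · simp
  · intro q' _ hne
    simp [Pi.single_apply, hne.symm]
  · simp

end AgAux

open AgAux in
/-- For every `g ≥ 1`, the `g(g+1)/2` matrices `p(eᵢ)` (for `1 ≤ i ≤ g`) and
`p(eᵢ − eⱼ)` (for `1 ≤ i < j ≤ g`) form a `ℤ`-basis of the lattice of symmetric
`g × g` integer matrices; in particular the perfect cone of the root lattice `A_g`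
is basic. The family is indexed by pairs `(i, j)` with `i ≤ j`, the diagonal pairs
`(i, i)` corresponding to `p(eᵢ)` and the off-diagonal ones to `p(eᵢ − eⱼ)`. -/
theorem Ag_perfect_cone_basic (g : ℕ) (hg : 1 ≤ g) :
    Fintype.card {q : Fin g × Fin g // q.1 ≤ q.2} = g * (g + 1) / 2 ∧
    ∃ b : Module.Basis {q : Fin g × Fin g // q.1 ≤ q.2} ℤ (symLattice g),
      ∀ q : {q : Fin g × Fin g // q.1 ≤ q.2},
        (b q : Matrix (Fin g) (Fin g) ℤ) =
          if q.1.1 = q.1.2 then rankOneForm (Pi.single q.1.1 1)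
          else rankOneForm (Pi.single q.1.1 1 - Pi.single q.1.2 1) := by
  constructor
  · have h1 : Fintype.card {q : Fin g × Fin g // q.1 ≤ q.2} = Fintype.card (Sym2 (Fin g)) :=
      (Fintype.card_congr (Sym2.sortEquiv (α := Fin g))).symm
    rw [h1, Sym2.card, Fintype.card_fin, Nat.choose_two_right]
    simp [Nat.mul_comm]
  · refine ⟨Module.Basis.ofEquivFun (symEquiv g), fun q => ?_⟩
    have h1 : ((Module.Basis.ofEquivFun (symEquiv g)) q : symLattice g) = buildL (Pi.single q 1) := by
      rw [Module.Basis.coe_ofEquivFun]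
      simp [symEquiv]
    rw [h1, buildL_single]
    show rankOneForm (vvec q) = _
    unfold vvec
    split_ifs <;> rfl
end

section
/- Let v₁ = (1,1) and v₂ = (1,−1) in ℤ². Then p(v₁) + p(v₂) = 2·I₂ (equivalently, ½(q_{v₁}(x) + q_{v₂}(x)) = x₁² + x₂²), the matrices p(v₁) and p(v₂) are ℤ-linearly independent, but there exists no symmetric 2×2 integer matrix A such that (p(v₁), p(v₂), A) is a ℤ-basis of the lattice of symmetric 2×2 integer matrices; that is, p(v₁), p(v₂) cannot be completed to a ℤ-basis of Sym²(ℤ²) (the cone they span is simplicial but not basic). -/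
open Matrix

/-- For `v₁ = (1,1)` and `v₂ = (1,−1)` in `ℤ²` we have `p(v₁) + p(v₂) = 2·I₂`, the
matrices `p(v₁)` and `p(v₂)` are `ℤ`-linearly independent, but they cannot be
completed to a `ℤ`-basis of the lattice `Sym²(ℤ²)` of symmetric `2 × 2` integer
matrices: the cone they span is simplicial but not basic. -/
theorem simplicial_not_basic_example :
    rankOneForm (![1, 1] : Fin 2 → ℤ) + rankOneForm (![1, -1] : Fin 2 → ℤ) =
      (2 : ℤ) • (1 : Matrix (Fin 2) (Fin 2) ℤ) ∧
    LinearIndependent ℤ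
      ![rankOneForm (![1, 1] : Fin 2 → ℤ), rankOneForm (![1, -1] : Fin 2 → ℤ)] ∧
    ¬ ∃ (ι : Type) (b : Module.Basis ι ℤ (symLattice 2)),
        {A : symLattice 2 | (A : Matrix (Fin 2) (Fin 2) ℤ) = rankOneForm ![1, 1] ∨
          (A : Matrix (Fin 2) (Fin 2) ℤ) = rankOneForm ![1, -1]} ⊆ Set.range b := by
  have hsum : rankOneForm (![1, 1] : Fin 2 → ℤ) + rankOneForm (![1, -1] : Fin 2 → ℤ) =
      (2 : ℤ) • (1 : Matrix (Fin 2) (Fin 2) ℤ) := by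
    ext i j
    fin_cases i <;> fin_cases j <;>
      simp [rankOneForm, vecMulVec_apply, Matrix.one_apply]
  refine ⟨hsum, ?_, ?_⟩
  · rw [LinearIndependent.pair_iff]
    intro s t hst
    have h00 := congrFun (congrFun hst 0) 0
    have h01 := congrFun (congrFun hst 0) 1
    simp [rankOneForm, vecMulVec_apply] at h00 h01
    omega
  · rintro ⟨ι, b, hb⟩
    have hsym1 : (rankOneForm (![1, 1] : Fin 2 → ℤ)).IsSymm := by
      ext i j; fin_cases i <;> fin_cases j <;> simp [rankOneForm, vecMulVec_apply]
    have hsym2 : (rankOneForm (![1, -1] : Fin 2 → ℤ)).IsSymm := by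
      ext i j; fin_cases i <;> fin_cases j <;> simp [rankOneForm, vecMulVec_apply]
    set p1 : symLattice 2 := ⟨rankOneForm ![1, 1], hsym1⟩
    set p2 : symLattice 2 := ⟨rankOneForm ![1, -1], hsym2⟩
    obtain ⟨i1, hi1⟩ := hb (Or.inl rfl : p1 ∈ _)
    obtain ⟨i2, hi2⟩ := hb (Or.inr rfl : p2 ∈ _)
    have hne : p1 ≠ p2 := by
      intro h
      have := congrFun (congrFun (congrArg Subtype.val h) 0) 1
      simp [p1, p2, rankOneForm, vecMulVec_apply] at this
    have hii : i1 ≠ i2 := by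
      rintro rfl; exact hne (hi1.symm.trans hi2)
    have hIsym : (1 : Matrix (Fin 2) (Fin 2) ℤ).IsSymm := Matrix.isSymm_one
    set I2 : symLattice 2 := ⟨1, hIsym⟩
    have hsum' : p1 + p2 = (2 : ℤ) • I2 := by
      apply Subtype.ext
      simpa [p1, p2, I2] using hsum
    have hrepr : b.repr (p1 + p2) = b.repr ((2 : ℤ) • I2) := by rw [hsum']
    have h1 : b.repr (p1 + p2) i1 = 1 := by
      rw [← hi1, ← hi2, map_add, b.repr_self, b.repr_self]
      simp [Finsupp.single_apply, hii, hii.symm]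
    have h2 : b.repr ((2 : ℤ) • I2) i1 = 2 * b.repr I2 i1 := by
      rw [_root_.map_smul]; simp
    rw [hrepr, h2] at h1
    omega
end

section
/- Let S = {eᵢ + eⱼ : 1 ≤ i < j ≤ 4} ∪ {eᵢ − eⱼ : 1 ≤ i < j ≤ 4} ⊆ ℤ⁴, a set of 12 pairwise non-proportional vectors (the minimal vectors of the root lattice D₄ up to sign). Then the 12 matrices {p(v) : v ∈ S} are pairwise distinct, they span the full 10-dimensional real vector space of symmetric 4×4 matrices, and they are not linearly independent over ℝ. (Hence the perfect cone of D₄ has dimension 10 with 12 generating rays and is neither simplicial nor basic.) -/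
open Matrix

/-- The `12` minimal vectors of the root lattice `D₄` up to sign:
`eᵢ + eⱼ` and `eᵢ − eⱼ` for `1 ≤ i < j ≤ 4`, viewed in `ℝ⁴`. -/
def D4HalfRoots : Set (Fin 4 → ℝ) :=
  {x | ∃ i j : Fin 4, i < j ∧
    (x = Pi.single i 1 + Pi.single j 1 ∨ x = Pi.single i 1 - Pi.single j 1)}

/-- The subspace of symmetric `4 × 4` real matrices. -/
def symSubspace4 : Submodule ℝ (Matrix (Fin 4) (Fin 4) ℝ) where
  carrier := {A | A.IsSymm}
  zero_mem' := Matrix.isSymm_zero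
  add_mem' := fun ha hb => ha.add hb
  smul_mem' := fun c _ ha => ha.smul c

namespace D4Aux

def Vz : Fin 12 → (Fin 4 → ℤ) :=
  ![![1,1,0,0],![1,-1,0,0],![1,0,1,0],![1,0,-1,0],![1,0,0,1],![1,0,0,-1],
    ![0,1,1,0],![0,1,-1,0],![0,1,0,1],![0,1,0,-1],![0,0,1,1],![0,0,1,-1]]

def Vr : Fin 12 → (Fin 4 → ℝ) := fun k i => ((Vz k i : ℤ) : ℝ)

def Mz : Fin 12 → Matrix (Fin 4) (Fin 4) ℤ := fun k => rankOneForm (Vz k)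

def Mr : Fin 12 → Matrix (Fin 4) (Fin 4) ℝ := fun k => rankOneForm (Vr k)

lemma hv (k : Fin 12) (w : Fin 4 → ℤ) (h : Vz k = w) : Vr k = fun i => ((w i : ℤ) : ℝ) := by
  funext i; simp [Vr, h]

lemma f0 : (⟨0, by norm_num⟩ : Fin 4) = 0 := rfl
lemma f1 : (⟨1, by norm_num⟩ : Fin 4) = 1 := rfl
lemma f2 : (⟨2, by norm_num⟩ : Fin 4) = 2 := rfl
lemma f3 : (⟨3, by norm_num⟩ : Fin 4) = 3 := rfl

lemma e0 : Vz 0 = ![1,1,0,0] := by decide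
lemma em0 : Vz ⟨0, by norm_num⟩ = ![1,1,0,0] := by decide
lemma e1 : Vz 1 = ![1,-1,0,0] := by decide
lemma em1 : Vz ⟨1, by norm_num⟩ = ![1,-1,0,0] := by decide
lemma e2 : Vz 2 = ![1,0,1,0] := by decide
lemma em2 : Vz ⟨2, by norm_num⟩ = ![1,0,1,0] := by decide
lemma e3 : Vz 3 = ![1,0,-1,0] := by decide
lemma em3 : Vz ⟨3, by norm_num⟩ = ![1,0,-1,0] := by decide
lemma e4 : Vz 4 = ![1,0,0,1] := by decide
lemma em4 : Vz ⟨4, by norm_num⟩ = ![1,0,0,1] := by decide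
lemma e5 : Vz 5 = ![1,0,0,-1] := by decide
lemma em5 : Vz ⟨5, by norm_num⟩ = ![1,0,0,-1] := by decide
lemma e6 : Vz 6 = ![0,1,1,0] := by decide
lemma em6 : Vz ⟨6, by norm_num⟩ = ![0,1,1,0] := by decide
lemma e7 : Vz 7 = ![0,1,-1,0] := by decide
lemma em7 : Vz ⟨7, by norm_num⟩ = ![0,1,-1,0] := by decide
lemma e8 : Vz 8 = ![0,1,0,1] := by decide
lemma em8 : Vz ⟨8, by norm_num⟩ = ![0,1,0,1] := by decide
lemma e9 : Vz 9 = ![0,1,0,-1] := by decide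
lemma em9 : Vz ⟨9, by norm_num⟩ = ![0,1,0,-1] := by decide
lemma e10 : Vz 10 = ![0,0,1,1] := by decide
lemma em10 : Vz ⟨10, by norm_num⟩ = ![0,0,1,1] := by decide
lemma e11 : Vz 11 = ![0,0,1,-1] := by decide
lemma em11 : Vz ⟨11, by norm_num⟩ = ![0,0,1,-1] := by decide

set_option maxHeartbeats 1000000 in
lemma roots_eq : D4HalfRoots = Set.range Vr := by
  ext x
  constructor
  · rintro ⟨i, j, hij, h | h⟩ <;> fin_cases i <;> fin_cases j <;>
      first
      | (exfalso; revert hij; decide)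
      | (subst h
         first
       | (refine ⟨(0 : Fin 12), ?_⟩; rw [hv _ _ e0]; funext t; fin_cases t <;> simp +decide [Pi.single_apply]; done)
       | (refine ⟨(1 : Fin 12), ?_⟩; rw [hv _ _ e1]; funext t; fin_cases t <;> simp +decide [Pi.single_apply]; done)
       | (refine ⟨(2 : Fin 12), ?_⟩; rw [hv _ _ e2]; funext t; fin_cases t <;> simp +decide [Pi.single_apply]; done)
       | (refine ⟨(3 : Fin 12), ?_⟩; rw [hv _ _ e3]; funext t; fin_cases t <;> simp +decide [Pi.single_apply]; done)
       | (refine ⟨(4 : Fin 12), ?_⟩; rw [hv _ _ e4]; funext t; fin_cases t <;> simp +decide [Pi.single_apply]; done)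
       | (refine ⟨(5 : Fin 12), ?_⟩; rw [hv _ _ e5]; funext t; fin_cases t <;> simp +decide [Pi.single_apply]; done)
       | (refine ⟨(6 : Fin 12), ?_⟩; rw [hv _ _ e6]; funext t; fin_cases t <;> simp +decide [Pi.single_apply]; done)
       | (refine ⟨(7 : Fin 12), ?_⟩; rw [hv _ _ e7]; funext t; fin_cases t <;> simp +decide [Pi.single_apply]; done)
       | (refine ⟨(8 : Fin 12), ?_⟩; rw [hv _ _ e8]; funext t; fin_cases t <;> simp +decide [Pi.single_apply]; done)
       | (refine ⟨(9 : Fin 12), ?_⟩; rw [hv _ _ e9]; funext t; fin_cases t <;> simp +decide [Pi.single_apply]; done)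
       | (refine ⟨(10 : Fin 12), ?_⟩; rw [hv _ _ e10]; funext t; fin_cases t <;> simp +decide [Pi.single_apply]; done)
       | (refine ⟨(11 : Fin 12), ?_⟩; rw [hv _ _ e11]; funext t; fin_cases t <;> simp +decide [Pi.single_apply]; done))
  · rintro ⟨k, rfl⟩
    fin_cases k
    · exact ⟨⟨0,by norm_num⟩, ⟨1,by norm_num⟩, by decide, Or.inl (by rw [hv _ _ em0]; funext t; fin_cases t <;> simp +decide [Pi.single_apply])⟩
    · exact ⟨⟨0,by norm_num⟩, ⟨1,by norm_num⟩, by decide, Or.inr (by rw [hv _ _ em1]; funext t; fin_cases t <;> simp +decide [Pi.single_apply])⟩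
    · exact ⟨⟨0,by norm_num⟩, ⟨2,by norm_num⟩, by decide, Or.inl (by rw [hv _ _ em2]; funext t; fin_cases t <;> simp +decide [Pi.single_apply])⟩
    · exact ⟨⟨0,by norm_num⟩, ⟨2,by norm_num⟩, by decide, Or.inr (by rw [hv _ _ em3]; funext t; fin_cases t <;> simp +decide [Pi.single_apply])⟩
    · exact ⟨⟨0,by norm_num⟩, ⟨3,by norm_num⟩, by decide, Or.inl (by rw [hv _ _ em4]; funext t; fin_cases t <;> simp +decide [Pi.single_apply])⟩
    · exact ⟨⟨0,by norm_num⟩, ⟨3,by norm_num⟩, by decide, Or.inr (by rw [hv _ _ em5]; funext t; fin_cases t <;> simp +decide [Pi.single_apply])⟩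
    · exact ⟨⟨1,by norm_num⟩, ⟨2,by norm_num⟩, by decide, Or.inl (by rw [hv _ _ em6]; funext t; fin_cases t <;> simp +decide [Pi.single_apply])⟩
    · exact ⟨⟨1,by norm_num⟩, ⟨2,by norm_num⟩, by decide, Or.inr (by rw [hv _ _ em7]; funext t; fin_cases t <;> simp +decide [Pi.single_apply])⟩
    · exact ⟨⟨1,by norm_num⟩, ⟨3,by norm_num⟩, by decide, Or.inl (by rw [hv _ _ em8]; funext t; fin_cases t <;> simp +decide [Pi.single_apply])⟩
    · exact ⟨⟨1,by norm_num⟩, ⟨3,by norm_num⟩, by decide, Or.inr (by rw [hv _ _ em9]; funext t; fin_cases t <;> simp +decide [Pi.single_apply])⟩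
    · exact ⟨⟨2,by norm_num⟩, ⟨3,by norm_num⟩, by decide, Or.inl (by rw [hv _ _ em10]; funext t; fin_cases t <;> simp +decide [Pi.single_apply])⟩
    · exact ⟨⟨2,by norm_num⟩, ⟨3,by norm_num⟩, by decide, Or.inr (by rw [hv _ _ em11]; funext t; fin_cases t <;> simp +decide [Pi.single_apply])⟩

lemma image_eq : rankOneForm '' D4HalfRoots = Set.range Mr := by
  rw [roots_eq, ← Set.range_comp]; rfl

lemma Mr_eq_map (k : Fin 12) : Mr k = (Mz k).map (fun z : ℤ => (z : ℝ)) := by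
  ext i j
  simp [Mr, Mz, rankOneForm, vecMulVec, Vr, Matrix.map_apply]

lemma Mr_inj : Function.Injective Mr := by
  have hz : Function.Injective Mz := by decide
  intro a b h
  apply hz
  ext i j
  rw [Mr_eq_map, Mr_eq_map] at h
  have h2 := congrFun (congrFun h i) j
  simp only [Matrix.map_apply] at h2
  exact_mod_cast h2

lemma ncard_12 : (Set.range Mr).ncard = 12 := by
  classical
  rw [← Set.image_univ, ← Finset.coe_univ, ← Finset.coe_image, Set.ncard_coe_finset,
      Finset.card_image_of_injective _ Mr_inj, Finset.card_univ, Fintype.card_fin]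

lemma Mr_symm (k : Fin 12) : (Mr k).IsSymm := by
  show (Mr k)ᵀ = Mr k
  ext i j
  simp [Mr, rankOneForm, vecMulVec, Matrix.transpose_apply, mul_comm]

set_option maxHeartbeats 2000000 in
lemma span_eq : Submodule.span ℝ (Set.range Mr) = symSubspace4 := by
  apply le_antisymm
  · rw [Submodule.span_le]
    rintro _ ⟨k, rfl⟩
    exact Mr_symm k
  · intro A hA
    replace hA : A.IsSymm := hA
    have hmem : ∀ k : Fin 12, Mr k ∈ Submodule.span ℝ (Set.range Mr) :=
      fun k => Submodule.subset_span ⟨k, rfl⟩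
    have h01 : A 1 0 = A 0 1 := hA.apply 0 1
    have h02 : A 2 0 = A 0 2 := hA.apply 0 2
    have h03 : A 3 0 = A 0 3 := hA.apply 0 3
    have h12 : A 2 1 = A 1 2 := hA.apply 1 2
    have h13 : A 3 1 = A 1 3 := hA.apply 1 3
    have h23 : A 3 2 = A 2 3 := hA.apply 2 3
    have key : A =
        (((A 0 0 + A 1 1)/2 - (A 0 0 + A 1 1 + A 2 2 + A 3 3)/6 + A 0 1)/2) • Mr 0 + (((A 0 0 + A 1 1)/2 - (A 0 0 + A 1 1 + A 2 2 + A 3 3)/6 - A 0 1)/2) • Mr 1 + (((A 0 0 + A 2 2)/2 - (A 0 0 + A 1 1 + A 2 2 + A 3 3)/6 + A 0 2)/2) • Mr 2 + (((A 0 0 + A 2 2)/2 - (A 0 0 + A 1 1 + A 2 2 + A 3 3)/6 - A 0 2)/2) • Mr 3 + (((A 0 0 + A 3 3)/2 - (A 0 0 + A 1 1 + A 2 2 + A 3 3)/6 + A 0 3)/2) • Mr 4 + (((A 0 0 + A 3 3)/2 - (A 0 0 + A 1 1 + A 2 2 + A 3 3)/6 - A 0 3)/2) • Mr 5 + (((A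 1 1 + A 2 2)/2 - (A 0 0 + A 1 1 + A 2 2 + A 3 3)/6 + A 1 2)/2) • Mr 6 + (((A 1 1 + A 2 2)/2 - (A 0 0 + A 1 1 + A 2 2 + A 3 3)/6 - A 1 2)/2) • Mr 7 + (((A 1 1 + A 3 3)/2 - (A 0 0 + A 1 1 + A 2 2 + A 3 3)/6 + A 1 3)/2) • Mr 8 + (((A 1 1 + A 3 3)/2 - (A 0 0 + A 1 1 + A 2 2 + A 3 3)/6 - A 1 3)/2) • Mr 9 + (((A 2 2 + A 3 3)/2 - (A 0 0 + A 1 1 + A 2 2 + A 3 3)/6 + A 2 3)/2) • Mr 10 + (((A 2 2 + A 3 3)/2 - (A 0 0 + A 1 1 + A 2 2 + A 3 3)/6 - A 2 3)/2) • Mr 11 := by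
      ext i j
      fin_cases i <;> fin_cases j <;>
        (norm_num [Matrix.add_apply, Matrix.smul_apply, Mr, rankOneForm, vecMulVec,
          Matrix.of_apply, Matrix.cons_val_two, Matrix.cons_val_three, Matrix.vecHead, Matrix.vecTail, Vr, f0, f1, f2, f3, e0, e1, e2, e3, e4, e5, e6, e7, e8, e9, e10, e11] <;>
         linarith [h01, h02, h03, h12, h13, h23])
    rw [key]
    exact add_mem (add_mem (add_mem (add_mem (add_mem (add_mem (add_mem (add_mem (add_mem (add_mem (add_mem (Submodule.smul_mem _ _ (hmem _)) (Submodule.smul_mem _ _ (hmem _))) (Submodule.smul_mem _ _ (hmem _))) (Submodule.smul_mem _ _ (hmem _))) (Submodule.smul_mem _ _ (hmem _))) (Submodule.smul_mem _ _ (hmem _))) (Submodule.smul_mem _ _ (hmem _))) (Submodule.smul_mem _ _ (hmem _))) (Submodule.smul_mem _ _ (hmem _))) (Submodule.smul_mem _ _ (hmem _))) (Submodule.smul_mem _ _ (hmem _))) (Submodule.smul_mem _ _ (hmem _))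

/-- row and column index of the 10 entries on/above the diagonal -/
def rI : Fin 10 → Fin 4 := ![0,0,0,0,1,1,1,2,2,3]
def cI : Fin 10 → Fin 4 := ![0,1,2,3,1,2,3,2,3,3]

def BzM : Fin 10 → Matrix (Fin 4) (Fin 4) ℤ := fun k =>
  Matrix.of fun i j => if (i = rI k ∧ j = cI k) ∨ (i = cI k ∧ j = rI k) then 1 else 0

def Br : Fin 10 → Matrix (Fin 4) (Fin 4) ℝ := fun k => (BzM k).map (fun z : ℤ => (z : ℝ))

lemma Br_symm (k : Fin 10) : (Br k).IsSymm := by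
  show (Br k)ᵀ = Br k
  ext i j
  simp only [Br, Matrix.map_apply, Matrix.transpose_apply, BzM, Matrix.of_apply]
  exact congrArg _ (if_congr (by tauto) rfl rfl)

set_option maxHeartbeats 2000000 in
lemma span_B : symSubspace4 = Submodule.span ℝ (Set.range Br) := by
  apply le_antisymm
  · intro A hA
    replace hA : A.IsSymm := hA
    have hmem : ∀ k : Fin 10, Br k ∈ Submodule.span ℝ (Set.range Br) :=
      fun k => Submodule.subset_span ⟨k, rfl⟩
    have h01 : A 1 0 = A 0 1 := hA.apply 0 1
    have h02 : A 2 0 = A 0 2 := hA.apply 0 2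
    have h03 : A 3 0 = A 0 3 := hA.apply 0 3
    have h12 : A 2 1 = A 1 2 := hA.apply 1 2
    have h13 : A 3 1 = A 1 3 := hA.apply 1 3
    have h23 : A 3 2 = A 2 3 := hA.apply 2 3
    have key : A =
        (A 0 0) • Br 0 + (A 0 1) • Br 1 + (A 0 2) • Br 2 + (A 0 3) • Br 3 + (A 1 1) • Br 4 + (A 1 2) • Br 5 + (A 1 3) • Br 6 + (A 2 2) • Br 7 + (A 2 3) • Br 8 + (A 3 3) • Br 9 := by
      ext i j
      fin_cases i <;> fin_cases j <;>
        (simp +decide [Matrix.add_apply, Matrix.smul_apply, Br, BzM, Matrix.map_apply,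
           Matrix.of_apply, f0, f1, f2, f3] <;>
         linarith [h01, h02, h03, h12, h13, h23])
    rw [key]
    exact add_mem (add_mem (add_mem (add_mem (add_mem (add_mem (add_mem (add_mem (add_mem (Submodule.smul_mem _ _ (hmem _)) (Submodule.smul_mem _ _ (hmem _))) (Submodule.smul_mem _ _ (hmem _))) (Submodule.smul_mem _ _ (hmem _))) (Submodule.smul_mem _ _ (hmem _))) (Submodule.smul_mem _ _ (hmem _))) (Submodule.smul_mem _ _ (hmem _))) (Submodule.smul_mem _ _ (hmem _))) (Submodule.smul_mem _ _ (hmem _))) (Submodule.smul_mem _ _ (hmem _))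
  · rw [Submodule.span_le]
    rintro _ ⟨k, rfl⟩
    exact Br_symm k

def L10 : Matrix (Fin 4) (Fin 4) ℝ →ₗ[ℝ] (Fin 10 → ℝ) where
  toFun A := fun m => A (rI m) (cI m)
  map_add' A B := rfl
  map_smul' c A := rfl

lemma hLB : ∀ k m : Fin 10, BzM k (rI m) (cI m) = if m = k then 1 else 0 := by decide

lemma Br_li : LinearIndependent ℝ Br := by
  have hcomp : (⇑L10 ∘ Br) = fun k => Pi.single k (1 : ℝ) := by
    funext k m
    show Br k (rI m) (cI m) = _
    simp only [Function.comp_apply, L10, LinearMap.coe_mk, AddHom.coe_mk, Br,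
      Matrix.map_apply, hLB, Pi.single_apply]
    split_ifs <;> norm_num
  have hb : (fun k => Pi.single k (1 : ℝ)) = ⇑(Pi.basisFun ℝ (Fin 10)) := by
    funext k; simp
  have : LinearIndependent ℝ (⇑L10 ∘ Br) := by
    rw [hcomp, hb]; exact (Pi.basisFun ℝ (Fin 10)).linearIndependent
  exact this.of_comp L10

lemma finrank_10 : Module.finrank ℝ symSubspace4 = 10 := by
  rw [span_B, finrank_span_eq_card Br_li, Fintype.card_fin]

end D4Aux

open D4Aux in
/-- The rank-one forms `p(v)` of the `12` (pairwise non-proportional) minimal vectors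
of `D₄` are pairwise distinct, they span the full `10`-dimensional space of symmetric
`4 × 4` real matrices, and they are not linearly independent over `ℝ`: the perfect
cone of `D₄` has dimension `10` with `12` generating rays, and is neither simplicial
nor basic. -/
theorem D4_perfect_cone_not_simplicial :
    Set.ncard (rankOneForm '' D4HalfRoots) = 12 ∧
    Submodule.span ℝ (rankOneForm '' D4HalfRoots) = symSubspace4 ∧
    Module.finrank ℝ symSubspace4 = 10 ∧
    ¬ LinearIndependent ℝ
        (fun A : (rankOneForm '' D4HalfRoots) => (A : Matrix (Fin 4) (Fin 4) ℝ)) := by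
  refine ⟨by rw [image_eq]; exact ncard_12, by rw [image_eq]; exact span_eq, finrank_10, ?_⟩
  intro hLI
  rw [image_eq] at hLI
  haveI : Fintype (Set.range Mr) := (Set.finite_range Mr).fintype
  have h1 : Module.finrank ℝ (Submodule.span ℝ (Set.range Mr)) = (Set.range Mr).toFinset.card :=
    finrank_span_set_eq_card hLI
  have h2 : (Set.range Mr).toFinset.card = 12 := by
    rw [← Set.ncard_eq_toFinset_card']; exact ncard_12
  rw [span_eq, finrank_10, h2] at h1
  exact absurd h1 (by norm_num)
end

section
/- Let M₁, M₂, M₃, M₄ be the symmetric 5×5 integer matrices M₁ = [[4,−2,−2,0,−2],[−2,4,0,−1,1],[−2,0,4,−1,1],[0,−1,−1,3,−1],[−2,1,1,−1,3]], M₂ = [[2,−1,−1,0,−1],[−1,2,0,0,0],[−1,0,2,−1,1],[0,0,−1,2,−1],[−1,0,1,−1,2]], M₃ = [[2,−1,−1,0,−1],[−1,2,0,−1,1],[−1,0,2,0,0],[0,−1,0,2,−1],[−1,1,0,−1,2]], M₄ = [[0,0,0,0,0],[0,0,0,0,0],[0,0,0,0,0],[0,0,0,1,−1],[0,0,0,−1,1]].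 Then M₁ + M₄ = M₂ + M₃, the real linear span of {M₁, M₂, M₃, M₄} has dimension exactly 3, and for each i the matrix Mᵢ is not a linear combination with nonnegative real coefficients of the other three. (Hence the cone ∑ᵢ ℝ≥0·Mᵢ is a 3-dimensional non-simplicial polyhedral cone.) -/
open Matrix

/-- The four generators of a `3`-dimensional non-simplicial cone in the second
Voronoi decomposition for `g = 5`. -/
def voronoiCone1 : Fin 4 → Matrix (Fin 5) (Fin 5) ℝ :=
  ![!![4, -2, -2, 0, -2;
      -2, 4, 0, -1, 1;
      -2, 0, 4, -1, 1;
      0, -1, -1, 3, -1;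
      -2, 1, 1, -1, 3],
    !![2, -1, -1, 0, -1;
      -1, 2, 0, 0, 0;
      -1, 0, 2, -1, 1;
      0, 0, -1, 2, -1;
      -1, 0, 1, -1, 2],
    !![2, -1, -1, 0, -1;
      -1, 2, 0, -1, 1;
      -1, 0, 2, 0, 0;
      0, -1, 0, 2, -1;
      -1, 1, 0, -1, 2],
    !![0, 0, 0, 0, 0;
      0, 0, 0, 0, 0;
      0, 0, 0, 0, 0;
      0, 0, 0, 1, -1;
      0, 0, 0, -1, 1]]

lemma voronoiCone1_rel : voronoiCone1 0 + voronoiCone1 3 = voronoiCone1 1 + voronoiCone1 2 := by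
  ext i j
  fin_cases i <;> fin_cases j <;> simp [voronoiCone1, vecHead, vecTail] <;> norm_num

lemma voronoiCone1_li : LinearIndependent ℝ ![voronoiCone1 1, voronoiCone1 2, voronoiCone1 3] := by
  rw [Fintype.linearIndependent_iff]
  intro g hg
  have e13 := congrFun (congrFun hg 1) 3
  have e23 := congrFun (congrFun hg 2) 3
  have e33 := congrFun (congrFun hg 3) 3
  simp [voronoiCone1, Fin.sum_univ_three, vecHead, vecTail] at e13 e23 e33
  have h3 : ∀ j : Fin 3, j = 0 ∨ j = 1 ∨ j = 2 := by decide
  intro i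
  rcases h3 i with rfl | rfl | rfl <;> linarith

lemma voronoiCone1_rank : Module.finrank ℝ (Submodule.span ℝ (Set.range voronoiCone1)) = 3 := by
  have hrel : voronoiCone1 0 = voronoiCone1 1 + voronoiCone1 2 - voronoiCone1 3 :=
    eq_sub_iff_add_eq.mpr voronoiCone1_rel
  have hspan : Submodule.span ℝ (Set.range voronoiCone1) =
      Submodule.span ℝ (Set.range ![voronoiCone1 1, voronoiCone1 2, voronoiCone1 3]) := by
    apply le_antisymm <;> rw [Submodule.span_le] <;> rintro x ⟨i, rfl⟩
    · have hi : i = 0 ∨ i = 1 ∨ i = 2 ∨ i = 3 := by omega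
      rcases hi with rfl | rfl | rfl | rfl
      · rw [hrel]
        exact sub_mem (add_mem (Submodule.subset_span ⟨0, rfl⟩)
          (Submodule.subset_span ⟨1, rfl⟩)) (Submodule.subset_span ⟨2, rfl⟩)
      · exact Submodule.subset_span ⟨0, rfl⟩
      · exact Submodule.subset_span ⟨1, rfl⟩
      · exact Submodule.subset_span ⟨2, rfl⟩
    · have h3 : ∀ j : Fin 3, j = 0 ∨ j = 1 ∨ j = 2 := by decide
      rcases h3 i with rfl | rfl | rfl
      · exact Submodule.subset_span ⟨1, rfl⟩
      · exact Submodule.subset_span ⟨2, rfl⟩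
      · exact Submodule.subset_span ⟨3, rfl⟩
  rw [hspan, finrank_span_eq_card voronoiCone1_li]
  simp

set_option maxHeartbeats 1000000 in
lemma voronoiCone1_notcomb (i : Fin 4) : ¬ ∃ c : Fin 4 → ℝ, (∀ j, 0 ≤ c j) ∧
    voronoiCone1 i = ∑ j ∈ Finset.univ.erase i, c j • voronoiCone1 j := by
  rintro ⟨c, hc, h⟩
  rw [Finset.sum_erase_eq_sub (Finset.mem_univ _)] at h
  have hi : i = 0 ∨ i = 1 ∨ i = 2 ∨ i = 3 := by omega
  rcases hi with rfl | rfl | rfl | rfl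
  · have e13 := congrFun (congrFun h 1) 3
    have e23 := congrFun (congrFun h 2) 3
    have e33 := congrFun (congrFun h 3) 3
    simp [voronoiCone1, Fin.sum_univ_four, vecHead, vecTail] at e13 e23 e33
    have := hc 3
    linarith
  · have e00 := congrFun (congrFun h 0) 0
    have e13 := congrFun (congrFun h 1) 3
    simp [voronoiCone1, Fin.sum_univ_four, vecHead, vecTail] at e00 e13
    have h0 := hc 0
    have h2 := hc 2
    linarith
  · have e00 := congrFun (congrFun h 0) 0
    have e23 := congrFun (congrFun h 2) 3
    simp [voronoiCone1, Fin.sum_univ_four, vecHead, vecTail] at e00 e23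
    have h0 := hc 0
    have h1' := hc 1
    linarith
  · have e00 := congrFun (congrFun h 0) 0
    have e33 := congrFun (congrFun h 3) 3
    simp [voronoiCone1, Fin.sum_univ_four, vecHead, vecTail] at e00 e33
    have h0 := hc 0
    have h1' := hc 1
    have h2 := hc 2
    linarith

/-- The matrices `M₁, M₂, M₃, M₄` satisfy `M₁ + M₄ = M₂ + M₃`, their real span has
dimension exactly `3`, and none of them is a nonnegative real linear combination of
the other three: the cone `∑ᵢ ℝ₊ Mᵢ` is a `3`-dimensional non-simplicial polyhedral
cone. -/
theorem voronoiCone1_non_simplicial :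
    voronoiCone1 0 + voronoiCone1 3 = voronoiCone1 1 + voronoiCone1 2 ∧
    Module.finrank ℝ (Submodule.span ℝ (Set.range voronoiCone1)) = 3 ∧
    ∀ i : Fin 4, ¬ ∃ c : Fin 4 → ℝ, (∀ j, 0 ≤ c j) ∧
      voronoiCone1 i = ∑ j ∈ Finset.univ.erase i, c j • voronoiCone1 j := by
  exact ⟨voronoiCone1_rel, voronoiCone1_rank, voronoiCone1_notcomb⟩
end
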